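/- Let S be a finite set of distinct integers, ε a positive integer, and suppose f is an ε-cover of S of minimum complexity (minimum number of segments). If k denotes the minimum complexity of any PGM index of S with parameter ε, then f contains at most k segments. (More precisely, the minimum ε-cover complexity is at most the minimum PGM index complexity.) -/

import Mathlib

/-- Points and segments in the plane. -/
abbrev Pt := ℝ × ℝ
abbrev Seg := Pt × Pt

/-- Membership of a point on a segment. -/
def onSeg (σ : Seg) (p : Pt) : Prop :=
  ∃ t : ℝ, 0 ≤ t ∧ t ≤ 1 ∧ p = σ.1 + t • (σ.2 - σ.1)

/-- `rankOf S s` is the (1-based) rank of `s` in the sorted order of `S`. -/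
def rankOf (S : Finset ℤ) (s : ℤ) : ℕ := (S.filter (· ≤ s)).card

/-- A PGM index of `S` with parameter `ε`: a set of y-monotone segments such that for every
point `p = (rank s, s)` of `F_S`, the horizontal segment of width `ε` centered at `p`
intersects at least one segment. -/
def IsPGM (S : Finset ℤ) (ε : ℕ) (G : Finset Seg) : Prop :=
  (∀ σ ∈ G, σ.1.2 ≤ σ.2.2) ∧
  ∀ s ∈ S, ∃ σ ∈ G, ∃ q : Pt, onSeg σ q ∧ q.2 = (s : ℝ) ∧ |q.1 - (rankOf S s : ℝ)| ≤ ε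

/-- An `ε`-cover of `S`: a set of segments of slope at least 1 such that every point of
`F_S` is within `L∞`-distance `ε` of some segment. -/
def IsCover (S : Finset ℤ) (ε : ℕ) (F : Finset Seg) : Prop :=
  (∀ σ ∈ F, σ.1.1 < σ.2.1 ∧ σ.2.1 - σ.1.1 ≤ σ.2.2 - σ.1.2) ∧
  ∀ s ∈ S, ∃ σ ∈ F, ∃ q : Pt, onSeg σ q ∧
    max |(rankOf S s : ℝ) - q.1| |(s : ℝ) - q.2| ≤ ε

/-- The minimum complexity of an `ε`-cover of `S` is at most the minimum complexity of a
PGM index of `S` with parameter `ε`: for every PGM index `G` there is an `ε`-cover with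
at most as many segments. -/

lemma rank_lt {S : Finset ℤ} {s t : ℤ} (ht : t ∈ S) (h : s < t) :
    rankOf S s < rankOf S t := by
  apply Finset.card_lt_card
  have hsub : S.filter (· ≤ s) ⊆ S.filter (· ≤ t) := by
    intro x hx
    simp only [Finset.mem_filter] at *
    exact ⟨hx.1, by omega⟩
  rw [Finset.ssubset_iff_of_subset hsub]
  exact ⟨t, Finset.mem_filter.mpr ⟨ht, le_refl t⟩,
    fun hc => absurd (Finset.mem_filter.mp hc).2 (by omega)⟩

lemma rank_sub_le {S : Finset ℤ} {s t : ℤ} (h : s ≤ t) :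
    (rankOf S t : ℤ) - rankOf S s ≤ t - s := by
  have hsub : S.filter (· ≤ t) ⊆ S.filter (· ≤ s) ∪ Finset.Ioc s t := by
    intro x hx
    simp only [Finset.mem_filter, Finset.mem_union, Finset.mem_Ioc] at *
    exact Or.imp (fun h' => ⟨hx.1, h'⟩) id (by omega)
  have hcard := le_trans (Finset.card_le_card hsub) (Finset.card_union_le _ _)
  rw [Int.card_Ioc] at hcard
  unfold rankOf
  omega

lemma pair_bound {S : Finset ℤ} {ε : ℕ} {σ : Seg} (hmono : σ.1.2 ≤ σ.2.2)
    (T : Finset ℤ)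
    (hq : ∀ s ∈ T, ∃ q : Pt, onSeg σ q ∧ q.2 = (s : ℝ) ∧ |q.1 - (rankOf S s : ℝ)| ≤ ε) :
    ∃ b : ℝ, ∀ s ∈ T, ∀ t ∈ T,
      |((rankOf S t : ℝ) - rankOf S s) - b * ((t : ℝ) - s)| ≤ 2 * ε := by
  have hε0 : (0:ℝ) ≤ ε := by positivity
  rcases eq_or_lt_of_le hmono with hdeg | hlt
  · -- degenerate: all elements of T are equal
    have hval : ∀ s ∈ T, (s : ℝ) = σ.1.2 := by
      intro s hs
      obtain ⟨q, ⟨u, _, _, hq1⟩, hq2, _⟩ := hq s hs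
      have : q.2 = σ.1.2 + u * (σ.2.2 - σ.1.2) := by rw [hq1]; simp [smul_eq_mul]
      rw [hq2, ← hdeg] at this
      simpa using this
    refine ⟨1, fun s hs t ht => ?_⟩
    have hst : s = t := by
      have := (hval s hs).trans (hval t ht).symm
      exact_mod_cast this
    subst hst
    simp [hε0]
  · -- nondegenerate
    set d : ℝ := σ.2.2 - σ.1.2 with hd
    have hd0 : 0 < d := by simp [hd]; linarith
    set b : ℝ := (σ.2.1 - σ.1.1) / d with hb
    have key : ∀ s ∈ T, |(σ.1.1 + ((s : ℝ) - σ.1.2) * b) - (rankOf S s : ℝ)| ≤ ε := by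
      intro s hs
      obtain ⟨q, ⟨u, _, _, hq1⟩, hq2, hq3⟩ := hq s hs
      have e2 : q.2 = σ.1.2 + u * d := by rw [hq1]; simp [smul_eq_mul, hd]
      have e1 : q.1 = σ.1.1 + u * (σ.2.1 - σ.1.1) := by rw [hq1]; simp [smul_eq_mul]
      have hu : u = ((s : ℝ) - σ.1.2) / d := by
        rw [hq2] at e2
        field_simp
        linarith
      have : σ.1.1 + ((s : ℝ) - σ.1.2) * b = q.1 := by
        rw [e1, hu, hb]
        field_simp
      rw [this]
      exact hq3
    refine ⟨b, fun s hs t ht => ?_⟩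
    have h1 := key s hs
    have h2 := key t ht
    have habs := abs_le.mp h1
    have habs2 := abs_le.mp h2
    rw [abs_le]
    constructor <;> nlinarith [habs.1, habs.2, habs2.1, habs2.2]

lemma seg_point (ε c α lo hi r s : ℝ) (hε0 : 0 < ε) (hc0 : 0 < c) (hlohi : lo < hi)
    (hD : |r - α - c * s| ≤ ε * (1 + c)) (hlos : lo ≤ s - ε) (hshi : s + ε ≤ hi) :
    ∃ q : Pt, onSeg ((α + c * lo, lo), (α + c * hi, hi)) q ∧
      max |r - q.1| |s - q.2| ≤ ε := by
  have h1c : (0:ℝ) < 1 + c := by linarith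
  set D := r - α - c * s with hDdef
  have hDd : |D / (1 + c)| ≤ ε := by
    rw [abs_div, abs_of_pos h1c, div_le_iff₀ h1c]
    linarith [hD]
  have habs := abs_le.mp hDd
  set qy := s + D / (1 + c) with hqy
  have hqylo : lo ≤ qy := by simp only [hqy]; linarith
  have hqyhi : qy ≤ hi := by simp only [hqy]; linarith
  refine ⟨(α + c * qy, qy), ⟨(qy - lo) / (hi - lo), ?_, ?_, ?_⟩, ?_⟩
  · apply div_nonneg <;> linarith
  · rw [div_le_one (by linarith)]; linarith
  · have hne : hi - lo ≠ 0 := by linarith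
    simp only [Prod.ext_iff, Prod.fst_add, Prod.snd_add, Prod.smul_fst, Prod.smul_snd,
      Prod.fst_sub, Prod.snd_sub, smul_eq_mul]
    constructor
    · show α + c * qy = α + c * lo + (qy - lo) / (hi - lo) * (α + c * hi - (α + c * lo))
      field_simp
      ring
    · show qy = lo + (qy - lo) / (hi - lo) * (hi - lo)
      field_simp
      ring
  · have e1 : r - (α + c * qy) = D / (1 + c) := by
      simp only [hqy, hDdef]
      field_simp
      ring
    have e2 : s - qy = -(D / (1 + c)) := by simp only [hqy]; ring
    show max |r - (α + c * qy)| |s - qy| ≤ ε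
    rw [e1, e2, abs_neg]
    exact max_le hDd hDd

lemma cover_seg (S : Finset ℤ) (ε : ℕ) (hε : 0 < ε) (T : Finset ℤ) (hTS : T ⊆ S)
    (hT : T.Nonempty) (b : ℝ)
    (hb : ∀ s ∈ T, ∀ t ∈ T,
      |((rankOf S t : ℝ) - rankOf S s) - b * ((t : ℝ) - s)| ≤ 2 * ε) :
    ∃ τ : Seg, (τ.1.1 < τ.2.1 ∧ τ.2.1 - τ.1.1 ≤ τ.2.2 - τ.1.2) ∧
      ∀ s ∈ T, ∃ q : Pt, onSeg τ q ∧
        max |(rankOf S s : ℝ) - q.1| |(s : ℝ) - q.2| ≤ ε := by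
  have hε1 : (1:ℝ) ≤ ε := by exact_mod_cast hε
  have hε0 : (0:ℝ) < ε := by linarith
  -- rank facts for pairs in T
  have hrank : ∀ s ∈ T, ∀ t ∈ T, s < t →
      (1:ℝ) ≤ (rankOf S t : ℝ) - rankOf S s ∧
      (rankOf S t : ℝ) - rankOf S s ≤ (t : ℝ) - s := by
    intro s hs t ht hlt
    have h1 := rank_lt (S := S) (hTS ht) hlt
    have h2 := rank_sub_le (S := S) (s := s) (t := t) hlt.le
    constructor
    · have h1' : (rankOf S s : ℝ) + 1 ≤ rankOf S t := by exact_mod_cast h1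
      linarith
    · exact_mod_cast h2
  -- obtain the slope c
  obtain ⟨c, hc0, hc1, hpair⟩ :
      ∃ c : ℝ, 0 < c ∧ c ≤ 1 ∧ ∀ s ∈ T, ∀ t ∈ T,
        |((rankOf S t : ℝ) - rankOf S s) - c * ((t : ℝ) - s)| ≤ 2 * ε * (1 + c) := by
    have symm_red : ∀ c : ℝ, 0 < c →
        (∀ s ∈ T, ∀ t ∈ T, s < t →
          |((rankOf S t : ℝ) - rankOf S s) - c * ((t : ℝ) - s)| ≤ 2 * ε * (1 + c)) →
        (∀ s ∈ T, ∀ t ∈ T,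
          |((rankOf S t : ℝ) - rankOf S s) - c * ((t : ℝ) - s)| ≤ 2 * ε * (1 + c)) := by
      intro c hc h s hs t ht
      rcases lt_trichotomy s t with hlt | heq | hgt
      · exact h s hs t ht hlt
      · rw [heq]
        have he : ((rankOf S t : ℝ) - rankOf S t) - c * ((t : ℝ) - t) = 0 := by ring
        rw [he, abs_zero]
        positivity
      · have := h t ht s hs hgt
        rw [show ((rankOf S t : ℝ) - rankOf S s) - c * ((t : ℝ) - s)
            = -(((rankOf S s : ℝ) - rankOf S t) - c * ((s : ℝ) - t)) by ring, abs_neg]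
        exact this
    rcases le_or_gt b 0 with hble | hbpos
    · -- b ≤ 0 : near-vertical segment
      set D : ℝ := ((T.max' hT : ℤ) : ℝ) - ((T.min' hT : ℤ) : ℝ) with hD
      have hD0 : 0 ≤ D := by
        have := T.min'_le _ (T.max'_mem hT)
        simp only [hD]
        exact_mod_cast sub_nonneg.mpr (by exact_mod_cast this)
      have hDel : ∀ s ∈ T, ∀ t ∈ T, s < t → (t : ℝ) - s ≤ D := by
        intro s hs t ht _
        have h1 := T.min'_le s hs
        have h2 := T.le_max' t ht
        simp only [hD]
        push_cast
        have h1' : ((T.min' hT : ℤ) : ℝ) ≤ s := by exact_mod_cast h1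
        have h2' : (t : ℝ) ≤ ((T.max' hT : ℤ) : ℝ) := by exact_mod_cast h2
        linarith
      have hub : ∀ s ∈ T, ∀ t ∈ T, s < t → (rankOf S t : ℝ) - rankOf S s ≤ 2 * ε := by
        intro s hs t ht hlt
        have h := abs_le.mp (hb s hs t ht)
        have hts : (0:ℝ) < (t:ℝ) - s := by exact_mod_cast sub_pos.mpr hlt
        nlinarith [h.2]
      by_cases hDsmall : D ≤ 2 * ε
      · refine ⟨1, one_pos, le_refl 1, symm_red 1 one_pos ?_⟩
        intro s hs t ht hlt
        have h1 := hrank s hs t ht hlt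
        have h2 := hDel s hs t ht hlt
        have h3 := hub s hs t ht hlt
        rw [abs_le]
        constructor <;> nlinarith
      · push_neg at hDsmall
        have hDpos : 0 < D := by linarith
        refine ⟨2 * ε / D, by positivity, ?_, symm_red _ (by positivity) ?_⟩
        · rw [div_le_one hDpos]; linarith
        · intro s hs t ht hlt
          have h1 := hrank s hs t ht hlt
          have h2 := hDel s hs t ht hlt
          have h3 := hub s hs t ht hlt
          have hts : (0:ℝ) < (t:ℝ) - s := by exact_mod_cast sub_pos.mpr hlt
          have hcD : (2 * ε / D) * ((t:ℝ) - s) ≤ 2 * ε := by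
            rw [div_mul_eq_mul_div, div_le_iff₀ hDpos]
            nlinarith
          have hc0' : (0:ℝ) < 2 * ε / D := by positivity
          rw [abs_le]
          constructor <;> nlinarith
    · rcases le_or_gt b 1 with hb1 | hb1
      · refine ⟨b, hbpos, hb1, fun s hs t ht => ?_⟩
        have := hb s hs t ht
        nlinarith [this, abs_nonneg (((rankOf S t : ℝ) - rankOf S s) - b * ((t : ℝ) - s))]
      · refine ⟨1, one_pos, le_refl 1, symm_red 1 one_pos ?_⟩
        intro s hs t ht hlt
        have h1 := hrank s hs t ht hlt
        have h := abs_le.mp (hb s hs t ht)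
        have hts : (0:ℝ) < (t:ℝ) - s := by exact_mod_cast sub_pos.mpr hlt
        rw [abs_le]
        constructor <;> nlinarith [h.1, h.2]
  -- the midpoint α
  have h1c : (0:ℝ) < 1 + c := by linarith
  obtain ⟨p, hp, hpmax⟩ := T.exists_max_image (fun s => (rankOf S s : ℝ) - c * s) hT
  obtain ⟨r, hr, hrmin⟩ := T.exists_min_image (fun s => (rankOf S s : ℝ) - c * s) hT
  set α := (((rankOf S p : ℝ) - c * p) + ((rankOf S r : ℝ) - c * r)) / 2 with hα
  have hspread : ((rankOf S p : ℝ) - c * p) - ((rankOf S r : ℝ) - c * r) ≤ 2 * ε * (1 + c) := by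
    have h := abs_le.mp (hpair r hr p hp)
    linarith [h.2]
  have hαs : ∀ s ∈ T, |(rankOf S s : ℝ) - α - c * s| ≤ ε * (1 + c) := by
    intro s hs
    have h1 := hpmax s hs
    have h2 := hrmin s hs
    rw [abs_le]
    constructor <;> simp only [hα] <;> linarith
  -- the segment
  set lo : ℝ := ((T.min' hT : ℤ) : ℝ) - ε with hlo
  set hi : ℝ := ((T.max' hT : ℤ) : ℝ) + ε with hhi
  have hminmax : ((T.min' hT : ℤ) : ℝ) ≤ ((T.max' hT : ℤ) : ℝ) := by
    exact_mod_cast T.min'_le _ (T.max'_mem hT)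
  have hlohi : lo < hi := by simp only [hlo, hhi]; linarith
  refine ⟨((α + c * lo, lo), (α + c * hi, hi)), ⟨?_, ?_⟩, ?_⟩
  · show α + c * lo < α + c * hi
    nlinarith
  · show α + c * hi - (α + c * lo) ≤ hi - lo
    nlinarith
  · intro s hs
    have hsmin : ((T.min' hT : ℤ) : ℝ) ≤ (s : ℝ) := by exact_mod_cast T.min'_le s hs
    have hsmax : (s : ℝ) ≤ ((T.max' hT : ℤ) : ℝ) := by exact_mod_cast T.le_max' s hs
    exact seg_point ε c α lo hi (rankOf S s) s hε0 hc0 hlohi (hαs s hs)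
      (by simp only [hlo]; linarith) (by simp only [hhi]; linarith)

theorem stmt11 (S : Finset ℤ) (ε : ℕ) (hε : 0 < ε)
    (G : Finset Seg) (hG : IsPGM S ε G) :
    ∃ F : Finset Seg, IsCover S ε F ∧ F.card ≤ G.card := by
  classical
  obtain ⟨hmono, hserve⟩ := hG
  have pickex : ∀ s : ℤ, ∃ σ : Seg, s ∈ S →
      σ ∈ G ∧ ∃ q : Pt, onSeg σ q ∧ q.2 = (s : ℝ) ∧ |q.1 - (rankOf S s : ℝ)| ≤ ε := by
    intro s
    by_cases hs : s ∈ S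
    · obtain ⟨σ, h1, q, hq⟩ := hserve s hs
      exact ⟨σ, fun _ => ⟨h1, q, hq⟩⟩
    · exact ⟨((0,0),(0,0)), fun h => absurd h hs⟩
  choose pick hpick using pickex
  set T : Seg → Finset ℤ := fun σ => S.filter (fun s => pick s = σ) with hT
  have good : ∀ σ : Seg, (T σ).Nonempty →
      ∃ τ : Seg, (τ.1.1 < τ.2.1 ∧ τ.2.1 - τ.1.1 ≤ τ.2.2 - τ.1.2) ∧
        ∀ s ∈ T σ, ∃ q : Pt, onSeg τ q ∧
          max |(rankOf S s : ℝ) - q.1| |(s : ℝ) - q.2| ≤ ε := by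
    intro σ hne
    obtain ⟨s0, hs0⟩ := hne
    have hs0' := Finset.mem_filter.mp hs0
    have hσG : σ ∈ G := by
      have := (hpick s0 hs0'.1).1
      rwa [hs0'.2] at this
    have hqs : ∀ s ∈ T σ, ∃ q : Pt, onSeg σ q ∧ q.2 = (s : ℝ) ∧
        |q.1 - (rankOf S s : ℝ)| ≤ ε := by
      intro s hs
      have hs' := Finset.mem_filter.mp hs
      have := (hpick s hs'.1).2
      rwa [hs'.2] at this
    obtain ⟨b, hb⟩ := pair_bound (hmono σ hσG) (T σ) hqs
    exact cover_seg S ε hε (T σ) (Finset.filter_subset _ _) ⟨s0, hs0⟩ b hb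
  set g : Seg → Seg := fun σ =>
    if h : ∃ τ : Seg, (τ.1.1 < τ.2.1 ∧ τ.2.1 - τ.1.1 ≤ τ.2.2 - τ.1.2) ∧
        ∀ s ∈ T σ, ∃ q : Pt, onSeg τ q ∧
          max |(rankOf S s : ℝ) - q.1| |(s : ℝ) - q.2| ≤ ε
    then h.choose else ((0, 0), (1, 1)) with hg
  refine ⟨G.image g, ⟨?_, ?_⟩, le_trans (Finset.card_image_le) (le_refl _)⟩
  · intro τ hτ
    obtain ⟨σ, _, hτσ⟩ := Finset.mem_image.mp hτ
    by_cases h : ∃ τ' : Seg, (τ'.1.1 < τ'.2.1 ∧ τ'.2.1 - τ'.1.1 ≤ τ'.2.2 - τ'.1.2) ∧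
        ∀ s ∈ T σ, ∃ q : Pt, onSeg τ' q ∧
          max |(rankOf S s : ℝ) - q.1| |(s : ℝ) - q.2| ≤ ε
    · have : g σ = h.choose := by simp only [hg, dif_pos h]
      rw [← hτσ, this]
      exact h.choose_spec.1
    · have : g σ = ((0, 0), (1, 1)) := by simp only [hg, dif_neg h]
      rw [← hτσ, this]
      norm_num
  · intro s hs
    set σ := pick s with hσ
    have hσG : σ ∈ G := (hpick s hs).1
    have hsT : s ∈ T σ := Finset.mem_filter.mpr ⟨hs, rfl⟩
    have h : ∃ τ : Seg, (τ.1.1 < τ.2.1 ∧ τ.2.1 - τ.1.1 ≤ τ.2.2 - τ.1.2) ∧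
        ∀ s ∈ T σ, ∃ q : Pt, onSeg τ q ∧
          max |(rankOf S s : ℝ) - q.1| |(s : ℝ) - q.2| ≤ ε :=
      good σ ⟨s, hsT⟩
    have hgσ : g σ = h.choose := by simp only [hg, dif_pos h]
    refine ⟨g σ, Finset.mem_image_of_mem g hσG, ?_⟩
    rw [hgσ]
    exact h.choose_spec.2 s hsT
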